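/- Let l ≥ 1 and let f₁, …, f_l be polynomials in ℝ[q₁, …, q_l] such that for all i, j ∈ {1, …, l} one has q_i·∂f_j/∂q_i = q_j·∂f_i/∂q_j. Then there exist constants c₁, …, c_l ∈ ℝ and a polynomial M ∈ ℝ[q₁, …, q_l] such that f_i = c_i + q_i·∂M/∂q_i for all i ∈ {1, …, l}. -/

import Mathlib

open MvPolynomial Finsupp

lemma X_mul_pderiv_monomial {l : ℕ} (i : Fin l) (s : Fin l →₀ ℕ) (a : ℝ) :
    X i * pderiv i (monomial s a) = monomial s (a * s i) := by
  rw [pderiv_monomial, X, monomial_mul, one_mul]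
  by_cases h : s i = 0
  · simp [h]
  · have hs : Finsupp.single i 1 + (s - Finsupp.single i 1) = s := by
      rw [add_comm]
      ext j
      by_cases hj : j = i
      · subst hj
        simp [Nat.sub_add_cancel (Nat.one_le_iff_ne_zero.2 h)]
      · simp [Finsupp.single_eq_of_ne' (Ne.symm hj)]
    rw [hs]

lemma coeff_X_mul_pderiv {l : ℕ} (i : Fin l) (p : MvPolynomial (Fin l) ℝ) (d : Fin l →₀ ℕ) :
    coeff d (X i * pderiv i p) = (d i : ℝ) * coeff d p := by
  induction p using MvPolynomial.induction_on' with
  | monomial s a =>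
    rw [X_mul_pderiv_monomial, coeff_monomial, coeff_monomial]
    split_ifs with h
    · subst h; ring
    · ring
  | add p q hp hq =>
    simp [mul_add, hp, hq]

/-- Closed implies exact for the Euler derivations `θ_i = q_i·∂/∂q_i`: if
`q_i·∂f_j/∂q_i = q_j·∂f_i/∂q_j` for all `i, j`, then there are constants `c_i`
and a polynomial `M` with `f_i = c_i + q_i·∂M/∂q_i`. -/
theorem stmt_3 (l : ℕ) (hl : 1 ≤ l)
    (f : Fin l → MvPolynomial (Fin l) ℝ)
    (hf : ∀ i j, MvPolynomial.X i * MvPolynomial.pderiv i (f j)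
      = MvPolynomial.X j * MvPolynomial.pderiv j (f i)) :
    ∃ (c : Fin l → ℝ) (M : MvPolynomial (Fin l) ℝ),
      ∀ i, f i = MvPolynomial.C (c i) + MvPolynomial.X i * MvPolynomial.pderiv i M := by
  classical
  have hc : ∀ (d : Fin l →₀ ℕ) (i j : Fin l),
      (d i : ℝ) * coeff d (f j) = (d j : ℝ) * coeff d (f i) := by
    intro d i j
    rw [← coeff_X_mul_pderiv, ← coeff_X_mul_pderiv, hf i j]
  set S : Finset (Fin l →₀ ℕ) := Finset.univ.biUnion (fun i => (f i).support) with hS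
  set v : (Fin l →₀ ℕ) → ℝ :=
    fun d => (∑ j, (d j : ℝ) * coeff d (f j)) / (∑ j, ((d j : ℝ)) ^ 2) with hv
  refine ⟨fun i => coeff 0 (f i), ∑ d ∈ S, monomial d (v d), fun i => ?_⟩
  have hM : ∀ d : Fin l →₀ ℕ,
      coeff d (∑ e ∈ S, monomial e (v e)) = if d ∈ S then v d else 0 := by
    intro d
    rw [coeff_sum]
    simp only [coeff_monomial]
    rw [Finset.sum_ite_eq' S d v]
  ext d
  rw [coeff_add, coeff_C, coeff_X_mul_pderiv, hM]
  by_cases hd : d = 0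
  · subst hd
    simp
  · rw [if_neg (fun h => hd h.symm)]
    obtain ⟨j, hj⟩ := Finsupp.ne_iff.1 hd
    simp only [Finsupp.coe_zero, Pi.zero_apply] at hj
    by_cases hdS : d ∈ S
    · rw [if_pos hdS, zero_add]; simp only [hv]
      have hD : (0:ℝ) < ∑ j, ((d j : ℝ)) ^ 2 :=
        Finset.sum_pos' (fun _ _ => sq_nonneg _)
          ⟨j, Finset.mem_univ j, by
            have : (0:ℝ) < (d j : ℝ) := by exact_mod_cast Nat.pos_of_ne_zero hj
            positivity⟩
      have hnum : (d i : ℝ) * ∑ k, (d k : ℝ) * coeff d (f k)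
          = coeff d (f i) * ∑ k, ((d k : ℝ)) ^ 2 := by
        rw [Finset.mul_sum, Finset.mul_sum]
        refine Finset.sum_congr rfl fun k _ => ?_
        have h := hc d i k
        calc (d i : ℝ) * ((d k : ℝ) * coeff d (f k))
            = (d k : ℝ) * ((d i : ℝ) * coeff d (f k)) := by ring
          _ = (d k : ℝ) * ((d k : ℝ) * coeff d (f i)) := by rw [h]
          _ = coeff d (f i) * ((d k : ℝ)) ^ 2 := by ring
      rw [← mul_div_assoc, hnum, mul_div_cancel_right₀ _ (ne_of_gt hD)]
    · rw [if_neg hdS, mul_zero, zero_add]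
      have : d ∉ (f i).support := fun h =>
        hdS (Finset.mem_biUnion.2 ⟨i, Finset.mem_univ i, h⟩)
      exact MvPolynomial.notMem_support_iff.1 this
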